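/- arXiv:1806.08416 — 6 statements merged into one kernel-verified Lean document; each statement's English description precedes it below -/
import Mathlib

section
/- If a finite directed graph has no shortest path of length exactly k (a path of k edges between k+1 distinct vertices with no 'chord' edge from an earlier vertex to a strictly later non-adjacent vertex), then it has no shortest path of any length greater than k. -/
/-- A chordless ("shortest") path of length `k` (k edges, k+1 distinct vertices)
in the directed graph given by `D`, with no chord `D (t i) (t j)` for `j ≥ i+2`. -/
def ChordlessPath {V : Type*} (D : V → V → Prop) (k : ℕ) (t : ℕ → V) : Prop :=
  (∀ i j, i ≤ k → j ≤ k → i ≠ j → t i ≠ t j) ∧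
  (∀ i, i < k → D (t i) (t (i + 1))) ∧
  (∀ i j, j ≤ k → i + 2 ≤ j → ¬ D (t i) (t j))

theorem no_chordless_k_implies_no_longer {V : Type*} [Fintype V]
    (D : V → V → Prop) (k : ℕ)
    (h : ¬ ∃ t : ℕ → V, ChordlessPath D k t) :
    ∀ m, k < m → ¬ ∃ t : ℕ → V, ChordlessPath D m t := by
  rintro m hkm ⟨t, hdist, hedge, hchord⟩
  exact h ⟨t,
    fun i j hi hj => hdist i j (hi.trans hkm.le) (hj.trans hkm.le),
    fun i hi => hedge i (hi.trans hkm),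
    fun i j hj => hchord i j (hj.trans hkm.le)⟩
end

section
/- Suppose a directed graph (relation D on a finite type) has no cycle of length at most k (a cycle is a sequence of distinct vertices t_1,...,t_m with edges t_i→t_{i+1} and t_m→t_1), and has no chordless path of length k. Then the graph has no cycle of any length, i.e., the transitive closure of D is irreflexive. -/
/-- A cycle with `m` (distinct) vertices `t 0, …, t (m-1)`. -/
def IsCycle {V : Type*} (D : V → V → Prop) (m : ℕ) (t : ℕ → V) : Prop :=
  1 ≤ m ∧
  (∀ i j, i < m → j < m → i ≠ j → t i ≠ t j) ∧
  (∀ i, i + 1 < m → D (t i) (t (i + 1))) ∧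
  D (t (m - 1)) (t 0)

lemma transGen_walk {V : Type*} {D : V → V → Prop} {a b : V}
    (h : Relation.TransGen D a b) :
    ∃ n, ∃ t : ℕ → V, 1 ≤ n ∧ t 0 = a ∧ t n = b ∧ ∀ i, i < n → D (t i) (t (i + 1)) := by
  induction h with
  | @single c hd =>
      refine ⟨1, fun i => if i = 0 then a else c, le_refl 1, by simp, by simp, ?_⟩
      intro i hi
      interval_cases i
      simpa using hd
  | @tail b c hab hd ih =>
      obtain ⟨n, t, hn, h0, hnb, he⟩ := ih
      refine ⟨n + 1, fun i => if i ≤ n then t i else c, by omega, by simp [h0], by simp, ?_⟩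
      intro i hi
      by_cases hc : i + 1 ≤ n
      · simp only [show i ≤ n by omega, hc, if_true]
        exact he i (by omega)
      · rw [show i = n by omega]
        simp only [le_refl, if_true, show ¬ (n + 1 ≤ n) by omega, if_false]
        rw [hnb]; exact hd

theorem acyclic_of_no_small_cycle_no_chordless_path {V : Type*} [Fintype V]
    (D : V → V → Prop) (k : ℕ)
    (hcyc : ¬ ∃ m t, m ≤ k ∧ IsCycle D m t)
    (hpath : ¬ ∃ t : ℕ → V, ChordlessPath D k t) :
    ∀ σ : V, ¬ Relation.TransGen D σ σ := by
  intro σ hσ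
  obtain ⟨n, t0, hn1, h00, hnn, he0⟩ := transGen_walk hσ
  have hW : ∃ m, 1 ≤ m ∧ ∃ t : ℕ → V, t m = t 0 ∧ ∀ i, i < m → D (t i) (t (i + 1)) :=
    ⟨n, hn1, t0, by rw [hnn, h00], he0⟩
  classical
  obtain ⟨m, ⟨hm1, t, hclose, he⟩, hmin⟩ :
      ∃ m, (1 ≤ m ∧ ∃ t : ℕ → V, t m = t 0 ∧ ∀ i, i < m → D (t i) (t (i + 1))) ∧
        ∀ m', m' < m → ¬ (1 ≤ m' ∧ ∃ s : ℕ → V, s m' = s 0 ∧ ∀ i, i < m' → D (s i) (s (i + 1))) :=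
    ⟨Nat.find hW, Nat.find_spec hW, fun m' h => Nat.find_min hW h⟩
  -- distinctness of t 0 .. t (m-1)
  have hdist : ∀ i j, i < m → j < m → i ≠ j → t i ≠ t j := by
    have key : ∀ i j, i < j → j < m → t i ≠ t j := by
      intro i j hij hjm heq
      refine hmin (j - i) (by omega) ⟨by omega, fun l => t (i + l), ?_, ?_⟩
      · show t (i + (j - i)) = t (i + 0)
        rw [show i + (j - i) = j by omega, Nat.add_zero]; exact heq.symm
      · intro l hl
        show D (t (i + l)) (t (i + (l + 1)))
        rw [show i + (l + 1) = i + l + 1 by omega]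
        exact he (i + l) (by omega)
    intro i j hi hj hij
    rcases Nat.lt_or_ge i j with h | h
    · exact key i j h hj
    · exact fun heq => key j i (by omega) hi heq.symm
  -- m > k, else IsCycle contradiction
  have hmk : k < m := by
    by_contra h
    push_neg at h
    refine hcyc ⟨m, t, h, hm1, hdist, fun i hi => he i (by omega), ?_⟩
    have := he (m - 1) (by omega)
    rwa [show m - 1 + 1 = m by omega, hclose] at this
  -- chordless path on t 0 .. t k
  refine hpath ⟨t, fun i j hi hj => hdist i j (by omega) (by omega), fun i hi => he i (by omega), ?_⟩
  intro i j hjk hij hD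
  -- build shorter closed walk of length m - j + i + 1 using the chord
  have hjm : j < m := by omega
  set m' := m - j + i + 1 with hm'
  refine hmin m' (by omega) ⟨by omega,
    fun l => if l < m - j then t (j + l) else if l < m' then t (l - (m - j)) else t j, ?_, ?_⟩
  · simp only [show ¬ (m' < m - j) by omega, show ¬ (m' < m') by omega, if_false,
      show (0 : ℕ) < m - j by omega, if_true, Nat.add_zero]
  · intro l hl
    rcases Nat.lt_or_ge (l + 1) (m - j) with h1 | h1
    · simp only [show l < m - j by omega, h1, if_true]
      rw [show j + (l + 1) = j + l + 1 by omega]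
      exact he (j + l) (by omega)
    rcases Nat.eq_or_lt_of_le h1 with h1 | h1
    · -- l + 1 = m - j : from t (m-1) to t 0
      simp only [show l < m - j by omega, show ¬ (l + 1 < m - j) by omega,
        show l + 1 < m' by omega, if_true, if_false]
      rw [show l + 1 - (m - j) = 0 by omega, show j + l = m - 1 by omega, ← hclose]
      have := he (m - 1) (by omega)
      rwa [show m - 1 + 1 = m by omega] at this
    rcases Nat.lt_or_ge (l + 1) m' with h2 | h2
    · simp only [show ¬ (l < m - j) by omega, show ¬ (l + 1 < m - j) by omega,
        show l < m' by omega, h2, if_true, if_false]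
      rw [show l + 1 - (m - j) = l - (m - j) + 1 by omega]
      exact he (l - (m - j)) (by omega)
    · -- l + 1 = m' : the chord from t i to t j
      simp only [show ¬ (l < m - j) by omega, show ¬ (l + 1 < m - j) by omega,
        show l < m' by omega, show ¬ (l + 1 < m') by omega, if_true, if_false]
      rw [show l - (m - j) = i by omega]
      exact hD
end

section
/- Let D be a relation on a type V, ar an irreflexive transitive relation on V, and T' a subset of V. Assume (1) for all distinct σ1 σ2, if σ1 ∈ T' and D σ1 σ2 then ar σ1 σ2; and (2) for all pairwise-distinct σ1 σ2 σ3, if D σ1 σ2 and D σ2 σ3 then ar σ1 σ3 or ar σ2 σ3. Then for every D-path from some σ ∈ T' to any σ' ≠ σ (a sequence of distinct vertices connected by D-edges starting at σ and ending at σ'), we have ar σ σ'. -/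
/-- A `D`-path with `n` edges: `n+1` pairwise-distinct vertices connected by `D`. -/
def IsPath {V : Type*} (D : V → V → Prop) (n : ℕ) (t : ℕ → V) : Prop :=
  (∀ i j, i ≤ n → j ≤ n → i ≠ j → t i ≠ t j) ∧
  (∀ i, i < n → D (t i) (t (i + 1)))

theorem ar_of_path_from_T' {V : Type*} (D ar : V → V → Prop) (T' : Set V)
    (har_irrefl : ∀ σ, ¬ ar σ σ)
    (har_trans : ∀ σ1 σ2 σ3, ar σ1 σ2 → ar σ2 σ3 → ar σ1 σ3)
    (h1 : ∀ σ1 σ2, σ1 ≠ σ2 → σ1 ∈ T' → D σ1 σ2 → ar σ1 σ2)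
    (h2 : ∀ σ1 σ2 σ3, σ1 ≠ σ2 → σ2 ≠ σ3 → σ1 ≠ σ3 →
      D σ1 σ2 → D σ2 σ3 → ar σ1 σ3 ∨ ar σ2 σ3) :
    ∀ (n : ℕ) (t : ℕ → V), 1 ≤ n → IsPath D n t → t 0 ∈ T' → t 0 ≠ t n →
      ar (t 0) (t n) := by
  intro n
  induction n using Nat.strong_induction_on with
  | _ n ih =>
    intro t hn hp hT hne
    obtain ⟨hd, he⟩ := hp
    rcases Nat.lt_or_ge n 2 with h | h
    · have hn1 : n = 1 := by omega
      subst hn1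
      exact h1 _ _ hne hT (he 0 (by norm_num))
    · have e1 : D (t (n-2)) (t (n-1)) := by
        have := he (n-2) (by omega)
        rwa [show n-2+1 = n-1 by omega] at this
      have e2 : D (t (n-1)) (t n) := by
        have := he (n-1) (by omega)
        rwa [show n-1+1 = n by omega] at this
      have hd1 : t (n-2) ≠ t (n-1) := hd _ _ (by omega) (by omega) (by omega)
      have hd2 : t (n-1) ≠ t n := hd _ _ (by omega) (by omega) (by omega)
      have hd3 : t (n-2) ≠ t n := hd _ _ (by omega) (by omega) (by omega)
      rcases h2 _ _ _ hd1 hd2 hd3 e1 e2 with hc | hc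
      · rcases Nat.eq_or_lt_of_le h with h2' | h2'
        · have hz : n - 2 = 0 := by omega
          rwa [hz] at hc
        · have hIH : ar (t 0) (t (n-2)) := by
            apply ih (n-2) (by omega) t (by omega)
              ⟨fun i j hi hj => hd i j (by omega) (by omega),
               fun i hi => he i (by omega)⟩ hT
            exact hd 0 (n-2) (by omega) (by omega) (by omega)
          exact har_trans _ _ _ hIH hc
      · have hIH : ar (t 0) (t (n-1)) := by
          apply ih (n-1) (by omega) t (by omega)
            ⟨fun i j hi hj => hd i j (by omega) (by omega),
             fun i hi => he i (by omega)⟩ hT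
          exact hd 0 (n-1) (by omega) (by omega) (by omega)
        exact har_trans _ _ _ hIH hc
end

section
/- Under Snapshot Isolation (PSI ∧ PC: WW ⊆ vis and ar;vis ⊆ vis), with the Lemma 4 axioms (WR ⊆ vis, WW ⊆ ar, RW σ σ' → ¬vis σ' σ, vis ⊆ ar, ar a strict total order), any dependency cycle must contain at least two consecutive RW edges; i.e., there is no cycle in which every RW edge is immediately followed by a WR or WW edge. Concretely: if D = WR ∪ WW ∪ RW and we have D σ1 σ2, D σ2 σ3, …, D σn σ1 forming a cycle where no two consecutive edges (cyclically) are both RW, then we reach a contradiction. -/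
/-- Under SI (PSI ∧ PC), a dependency cycle in which no two (cyclically)
consecutive edges are both RW edges is impossible.  The cycle is given by a
`n`-periodic sequence `t` of vertices, pairwise distinct within one period. -/
theorem si_cycle_needs_two_consecutive_rw {Tx : Type*}
    (vis ar WR WW RW : Tx → Tx → Prop)
    (har_irrefl : ∀ σ, ¬ ar σ σ)
    (har_trans : ∀ σ1 σ2 σ3, ar σ1 σ2 → ar σ2 σ3 → ar σ1 σ3)
    (har_total : ∀ σ σ', σ ≠ σ' → ar σ σ' ∨ ar σ' σ)
    (hvis_irrefl : ∀ σ, ¬ vis σ σ)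
    (hvis_ar : ∀ σ σ', vis σ σ' → ar σ σ')
    (hWR : ∀ σ σ', WR σ σ' → vis σ σ')
    (hWW : ∀ σ σ', WW σ σ' → ar σ σ')
    (hRW : ∀ σ σ', RW σ σ' → ¬ vis σ' σ)
    (hPSI : ∀ σ σ', WW σ σ' → vis σ σ')
    (hPC : ∀ σ1 σ2 σ3, ar σ1 σ2 → vis σ2 σ3 → vis σ1 σ3)
    (n : ℕ) (hn : 1 ≤ n) (t : ℕ → Tx)
    (hper : ∀ i, t (i + n) = t i)
    (hdist : ∀ i j, i < n → j < n → i ≠ j → t i ≠ t j)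
    (hedge : ∀ i, WR (t i) (t (i + 1)) ∨ WW (t i) (t (i + 1)) ∨ RW (t i) (t (i + 1)))
    (hnoRR : ∀ i, ¬ (RW (t i) (t (i + 1)) ∧ RW (t (i + 1)) (t (i + 2)))) :
    False := by
  -- vis is transitive (using PC and vis ⊆ ar)
  have hvis_trans : ∀ a b c, vis a b → vis b c → vis a c := fun a b c h1 h2 =>
    hPC a b c (hvis_ar _ _ h1) h2
  -- a non-RW edge implies vis
  have hvisedge : ∀ i, ¬ RW (t i) (t (i + 1)) → vis (t i) (t (i + 1)) := by
    intro i hnot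
    rcases hedge i with h | h | h
    · exact hWR _ _ h
    · exact hPSI _ _ h
    · exact absurd h hnot
  -- key lemma: vis σ a, RW a b ⇒ ar σ b
  have hM : ∀ σ a b, vis σ a → RW a b → ar σ b := by
    intro σ a b hv hrw
    by_cases hsb : σ = b
    · exact absurd (hsb ▸ hv) (hRW _ _ hrw)
    · rcases har_total σ b hsb with h | h
      · exact h
      · exact absurd (hPC b σ a h hv) (hRW _ _ hrw)
  -- choose a starting index whose edge is not RW
  have hstart : ∃ i0, ¬ RW (t i0) (t (i0 + 1)) := by
    by_cases h0 : RW (t 0) (t 1)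
    · exact ⟨1, fun h1 => hnoRR 0 ⟨h0, h1⟩⟩
    · exact ⟨0, h0⟩
  obtain ⟨i0, hi0⟩ := hstart
  -- invariant going around the cycle
  have key : ∀ k, vis (t i0) (t (i0 + k + 1)) ∨
      (RW (t (i0 + k)) (t (i0 + k + 1)) ∧ ar (t i0) (t (i0 + k + 1))) := by
    intro k
    induction k with
    | zero => exact Or.inl (hvisedge i0 hi0)
    | succ k ih =>
      rcases ih with hv | ⟨hrw, har⟩
      · by_cases hr : RW (t (i0 + k + 1)) (t (i0 + k + 2))
        · exact Or.inr ⟨hr, hM _ _ _ hv hr⟩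
        · exact Or.inl (hvis_trans _ _ _ hv (hvisedge (i0 + k + 1) hr))
      · have hr2 : ¬ RW (t (i0 + k + 1)) (t (i0 + k + 2)) := fun h =>
          hnoRR (i0 + k) ⟨hrw, h⟩
        exact Or.inl (hPC _ _ _ har (hvisedge (i0 + k + 1) hr2))
  have := key (n - 1)
  have e : i0 + (n - 1) + 1 = i0 + n := by omega
  rw [e, hper i0] at this
  rcases this with h | ⟨_, h⟩
  · exact hvis_irrefl _ h
  · exact har_irrefl _ h
end

section
/- Suppose (V, D) is a directed graph where there exists a distinguished subset W ⊆ V ('writers') such that: (a) every edge of D has at least one endpoint in W, and (b) any two distinct vertices in W are D-related (in one direction or the other). Then every chordless D-path (pairwise distinct vertices, consecutive edges, no edge from t_i to t_j or t_j to t_i for non-consecutive i, j) has at most 4 vertices (length at most 3 edges). -/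
theorem chordless_path_bounded_by_writers {V : Type*}
    (D : V → V → Prop) (W : Set V)
    (hend : ∀ σ σ', D σ σ' → σ ∈ W ∨ σ' ∈ W)
    (hww : ∀ σ σ', σ ∈ W → σ' ∈ W → σ ≠ σ' → D σ σ' ∨ D σ' σ)
    (k : ℕ) (t : ℕ → V)
    (hdist : ∀ i j, i ≤ k → j ≤ k → i ≠ j → t i ≠ t j)
    (hedge : ∀ i, i < k → D (t i) (t (i + 1)))
    (hchordless : ∀ i j, j ≤ k → i + 2 ≤ j → ¬ D (t i) (t j) ∧ ¬ D (t j) (t i)) :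
    k ≤ 3 := by
  by_contra h
  push_neg at h
  have hk : 4 ≤ k := h
  have h01 := hend _ _ (hedge 0 (by omega))
  have h34 := hend _ _ (hedge 3 (by omega))
  have key : ∀ i j, i ≤ 1 → 3 ≤ j → j ≤ 4 → t i ∈ W → t j ∈ W → False := by
    intro i j hi hj hj4 hwi hwj
    have hne : t i ≠ t j := hdist i j (by omega) (by omega) (by omega)
    have hc := hchordless i j (by omega) (by omega)
    rcases hww _ _ hwi hwj hne with hd | hd
    · exact hc.1 hd
    · exact hc.2 hd
  rcases h01 with hw | hw <;> rcases h34 with hw' | hw'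
  · exact key 0 3 (by omega) (by omega) (by omega) hw hw'
  · exact key 0 4 (by omega) (by omega) (by omega) hw hw'
  · exact key 1 3 (by omega) (by omega) (by omega) hw hw'
  · exact key 1 4 (by omega) (by omega) (by omega) hw hw'
end

section
/- If D is an irreflexive relation on a finite type V and for some k ≥ 1 there is no D-cycle of length ≤ k and no chordless D-path with k edges (chords taken as forward edges D t_i t_j, j ≥ i+2), then for every strict total order candidate we can conclude TransGen D is irreflexive; in particular there exists an injective function f : V → ℕ with D σ σ' → f σ < f σ'. -/
lemma walk_of_transGen {V : Type*} {D : V → V → Prop} {a b : V}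
    (h : Relation.TransGen D a b) :
    ∃ n : ℕ, ∃ t : ℕ → V, 1 ≤ n ∧ t 0 = a ∧ t n = b ∧ ∀ i < n, D (t i) (t (i + 1)) := by
  induction h with
  | @single b' hab =>
      refine ⟨1, fun i => if i = 0 then a else b', le_refl 1, by simp, by simp, ?_⟩
      intro i hi
      interval_cases i
      simpa using hab
  | @tail b' c' hab hbc ih =>
      obtain ⟨n, t, hn, h0, hnb, hedge⟩ := ih
      refine ⟨n + 1, fun i => if i ≤ n then t i else c', by omega, ?_, ?_, ?_⟩
      · simpa using h0
      · simp
      · intro i hi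
        rcases Nat.lt_or_ge i n with h' | h'
        · simp only [if_pos (by omega : i ≤ n), if_pos (by omega : i + 1 ≤ n)]
          exact hedge i h'
        · have hin : i = n := by omega
          subst hin
          simp only [if_pos (le_refl i), if_neg (by omega : ¬ i + 1 ≤ i)]
          rw [hnb]
          exact hbc

lemma no_transGen {V : Type*} (D : V → V → Prop) (hirrefl : ∀ σ, ¬ D σ σ)
    (k : ℕ) (hk : 1 ≤ k)
    (hcyc : ¬ ∃ m t, m ≤ k ∧ IsCycle D m t)
    (hpath : ¬ ∃ t : ℕ → V, ChordlessPath D k t) :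
    ∀ σ, ¬ Relation.TransGen D σ σ := by
  intro σ h
  classical
  obtain ⟨n, t0, hn, h00, h0n, hedge0⟩ := walk_of_transGen h
  set P : ℕ → Prop := fun m => ∃ t : ℕ → V, 1 ≤ m ∧ t m = t 0 ∧ ∀ i < m, D (t i) (t (i + 1))
    with hPdef
  have hex : ∃ m, P m := ⟨n, t0, hn, by rw [h0n, h00], hedge0⟩
  obtain ⟨t, hm1, hclose, hedge⟩ := Nat.find_spec hex
  set m := Nat.find hex with hmdef
  have hmin : ∀ m', m' < m → ¬ P m' := fun m' h' => Nat.find_min hex h'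
  have hdist0 : ∀ i j, j < m → i < j → t i ≠ t j := by
    intro i j hj hij heq
    apply hmin (j - i) (by omega)
    refine ⟨fun l => t (i + l), by omega, ?_, ?_⟩
    · have h2 : i + (j - i) = j := by omega
      simp only [h2, Nat.add_zero]
      exact heq.symm
    · intro l hl
      have hlm : i + l < m := by omega
      exact hedge (i + l) hlm
  have hdist : ∀ i j, i < m → j < m → i ≠ j → t i ≠ t j := by
    intro i j hi hj hne
    rcases Nat.lt_or_ge i j with h' | h'
    · exact hdist0 i j hj h'
    · exact fun heq => hdist0 j i hi (by omega) heq.symm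
  have hcycle : IsCycle D m t := by
    refine ⟨hm1, hdist, fun i hi => hedge i (by omega), ?_⟩
    have := hedge (m - 1) (by omega)
    rwa [show m - 1 + 1 = m by omega, hclose] at this
  have hmk : k < m := by
    by_contra hle
    exact hcyc ⟨m, t, by omega, hcycle⟩
  apply hpath
  refine ⟨t, fun i j hi hj hne => hdist i j (by omega) (by omega) hne,
    fun i hi => hedge i (by omega), ?_⟩
  intro i j hj hij hD
  apply hmin (m - (j - i - 1)) (by omega)
  refine ⟨fun l => if l ≤ i then t l else t (l + (j - i - 1)), by omega, ?_, ?_⟩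
  · have h1 : ¬ (m - (j - i - 1)) ≤ i := by omega
    have h2 : m - (j - i - 1) + (j - i - 1) = m := by omega
    simp only [if_neg h1, h2, hclose, if_pos (Nat.zero_le i)]
  · intro l hl
    rcases Nat.lt_or_ge l i with h' | h'
    · simp only [if_pos (by omega : l ≤ i), if_pos (by omega : l + 1 ≤ i)]
      exact hedge l (by omega)
    · rcases Nat.eq_or_lt_of_le h' with h'' | h''
      · subst h''
        simp only [if_pos (le_refl i), if_neg (by omega : ¬ i + 1 ≤ i)]
        have h3 : i + 1 + (j - i - 1) = j := by omega
        rw [h3]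
        exact hD
      · simp only [if_neg (by omega : ¬ l ≤ i), if_neg (by omega : ¬ l + 1 ≤ i)]
        have h3 : l + 1 + (j - i - 1) = l + (j - i - 1) + 1 := by omega
        rw [h3]
        exact hedge (l + (j - i - 1)) (by omega)

theorem acyclic_and_topological_numbering {V : Type*} [Fintype V]
    (D : V → V → Prop) (hirrefl : ∀ σ, ¬ D σ σ)
    (k : ℕ) (hk : 1 ≤ k)
    (hcyc : ¬ ∃ m t, m ≤ k ∧ IsCycle D m t)
    (hpath : ¬ ∃ t : ℕ → V, ChordlessPath D k t) :
    (∀ σ, ¬ Relation.TransGen D σ σ) ∧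
    ∃ f : V → ℕ, Function.Injective f ∧ ∀ σ σ', D σ σ' → f σ < f σ' := by
  classical
  have h1 : ∀ σ, ¬ Relation.TransGen D σ σ := no_transGen D hirrefl k hk hcyc hpath
  refine ⟨h1, ?_⟩
  letI P : PartialOrder V :=
  { le := fun a b => a = b ∨ Relation.TransGen D a b
    le_refl := fun a => Or.inl rfl
    le_trans := by
      rintro a b c (rfl | hab) h2
      · exact h2
      · rcases h2 with rfl | hbc
        · exact Or.inr hab
        · exact Or.inr (hab.trans hbc)
    le_antisymm := by
      rintro a b (rfl | hab) h2
      · rfl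
      · rcases h2 with rfl | hba
        · rfl
        · exact absurd (hab.trans hba) (h1 a) }
  have hinj : Function.Injective (toLinearExtension (α := V)) := fun a b h => h
  set f : V → ℕ := fun σ =>
    (Finset.univ.filter (fun τ : V => toLinearExtension τ ≤ toLinearExtension σ)).card with hf
  have key : ∀ a b : V, toLinearExtension a < toLinearExtension b → f a < f b := by
    intro a b hab
    apply Finset.card_lt_card
    constructor
    · intro τ hτ
      simp only [Finset.mem_filter, Finset.mem_univ, true_and] at hτ ⊢
      exact le_trans hτ hab.le
    · intro hsub
      have hb : b ∈ Finset.univ.filter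
          (fun τ : V => toLinearExtension τ ≤ toLinearExtension b) := by simp
      have := hsub hb
      simp only [Finset.mem_filter, Finset.mem_univ, true_and] at this
      exact absurd this (not_le.mpr hab)
  refine ⟨f, ?_, ?_⟩
  · intro a b hfeq
    by_contra hne
    have hne' : toLinearExtension a ≠ toLinearExtension b := fun h => hne (hinj h)
    rcases hne'.lt_or_gt with h' | h'
    · exact (key a b h').ne hfeq
    · exact (key b a h').ne hfeq.symm
  · intro a b hD
    apply key
    have hle : toLinearExtension a ≤ toLinearExtension b :=
      toLinearExtension.monotone (Or.inr (Relation.TransGen.single hD))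
    refine lt_of_le_of_ne hle (fun h => ?_)
    have : a = b := hinj h
    subst this
    exact hirrefl a hD
end
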